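/- arXiv:1710.02290 — 7 statements merged into one kernel-verified Lean document; each statement's English description precedes it below -/
import Mathlib

section
/- Let M be a positive definite real symmetric n×n matrix and α a vector in ℝ^n. Then M - α αᵀ is positive semidefinite if and only if αᵀ M⁻¹ α ≤ 1. -/
open Matrix

theorem stmt0 {n : ℕ} (M : Matrix (Fin n) (Fin n) ℝ) (hM : M.PosDef)
    (α : Fin n → ℝ) :
    (M - vecMulVec α α).PosSemidef ↔ α ⬝ᵥ (M⁻¹ *ᵥ α) ≤ 1 := by
  have hdet : IsUnit M.det := isUnit_iff_ne_zero.mpr hM.det_pos.ne'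
  have hMinv : (M⁻¹).PosDef := hM.inv
  set u : Fin n → ℝ := M⁻¹ *ᵥ α with hu
  have hMu : M *ᵥ u = α := by
    rw [hu, mulVec_mulVec, mul_nonsing_inv M hdet, one_mulVec]
  have hsymm : Mᵀ = M := by
    ext i j
    simpa using congrFun (congrFun hM.isHermitian.eq i) j
  have houter : ∀ x : Fin n → ℝ, (vecMulVec α α) *ᵥ x = (α ⬝ᵥ x) • α := by
    intro x
    ext i
    simp [mulVec, vecMulVec_apply, dotProduct, Finset.sum_mul, Finset.mul_sum,
      mul_comm, mul_left_comm, mul_assoc]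
  have hquad : ∀ x : Fin n → ℝ, x ⬝ᵥ ((M - vecMulVec α α) *ᵥ x)
      = x ⬝ᵥ M *ᵥ x - (α ⬝ᵥ x) ^ 2 := by
    intro x
    rw [sub_mulVec, dotProduct_sub, houter, dotProduct_smul]
    simp [dotProduct_comm, sq]
  have hflip : ∀ x : Fin n → ℝ, x ⬝ᵥ M *ᵥ u = u ⬝ᵥ M *ᵥ x := by
    intro x
    rw [dotProduct_mulVec, ← mulVec_transpose, hsymm, dotProduct_comm]
  constructor
  · intro h
    have ht0 : 0 ≤ α ⬝ᵥ u := hMinv.posSemidef.dotProduct_mulVec_nonneg α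
    have h2 := h.dotProduct_mulVec_nonneg u
    simp only [star_trivial] at h2
    rw [hquad u] at h2
    have huMu : u ⬝ᵥ M *ᵥ u = α ⬝ᵥ u := by rw [hMu, dotProduct_comm]
    have hau : α ⬝ᵥ u = u ⬝ᵥ α := dotProduct_comm _ _
    nlinarith [h2, ht0, huMu]
  · intro ht
    refine posSemidef_iff_dotProduct_mulVec.mpr ⟨?_, ?_⟩
    · have : (vecMulVec α α).IsHermitian := by
        unfold Matrix.IsHermitian
        ext i j
        simp [vecMulVec_apply, mul_comm]
      exact hM.isHermitian.sub this
    · intro x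
      simp only [star_trivial]
      rw [hquad x]
      have huMu : u ⬝ᵥ M *ᵥ u = α ⬝ᵥ u := by rw [hMu, dotProduct_comm]
      have hax : α ⬝ᵥ x = u ⬝ᵥ M *ᵥ x := by rw [← hMu, dotProduct_comm, hflip]
      have hxMx : 0 ≤ x ⬝ᵥ M *ᵥ x := hM.posSemidef.dotProduct_mulVec_nonneg x
      have ht0 : 0 ≤ α ⬝ᵥ u := hMinv.posSemidef.dotProduct_mulVec_nonneg α
      have hcs : (u ⬝ᵥ M *ᵥ x) ^ 2 ≤ (x ⬝ᵥ M *ᵥ x) * (u ⬝ᵥ M *ᵥ u) := by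
        have hd : discrim (x ⬝ᵥ M *ᵥ x) (2 * (u ⬝ᵥ M *ᵥ x)) (u ⬝ᵥ M *ᵥ u) ≤ 0 := by
          apply discrim_le_zero
          intro s
          have h3 := hM.posSemidef.dotProduct_mulVec_nonneg (u + s • x)
          simp only [star_trivial] at h3
          simp only [dotProduct_add, add_dotProduct, smul_dotProduct, dotProduct_smul,
            mulVec_add, mulVec_smul, smul_eq_mul] at h3
          rw [hflip x] at h3
          nlinarith [h3]
        rw [discrim] at hd
        nlinarith [hd]
      have h1 : u ⬝ᵥ M *ᵥ u ≤ 1 := by rw [huMu]; exact ht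
      have h2 : (x ⬝ᵥ M *ᵥ x) * (u ⬝ᵥ M *ᵥ u) ≤ x ⬝ᵥ M *ᵥ x := by nlinarith
      rw [hax]
      linarith [hcs, h2]
end

section
/- Let A be positive definite symmetric n×n, H a q×n matrix, Ψ positive definite symmetric q×q, and F any n×n matrix. Then F (A⁻¹ - (A + Hᵀ Ψ⁻¹ H)⁻¹) Fᵀ is positive semidefinite. (This shows MSEM(LTE) - MSEM(SRLTE) ≥ 0, i.e., the stochastic restricted Liu-type estimator always dominates the Liu-type estimator.) -/
open Matrix

private lemma posDef_conj {m : ℕ} {B C : Matrix (Fin m) (Fin m) ℝ} (hB : B.PosDef)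
    (hC : IsUnit C) : (Cᴴ * B * C).PosDef := by
  refine PosDef.of_dotProduct_mulVec_pos ?_ ?_
  · exact isHermitian_conjTranspose_mul_mul C hB.1
  · intro x hx
    have hCx : C *ᵥ x ≠ 0 :=
      ((Matrix.mulVec_injective_iff_isUnit.mpr hC).ne_iff' (Matrix.mulVec_zero C)).2 hx
    simpa only [star_mulVec, dotProduct_mulVec, vecMul_vecMul] using hB.dotProduct_mulVec_pos hCx

open scoped MatrixOrder in
/-- If `S` is positive definite and `S - 1` is PSD, then `1 - S⁻¹` is PSD. -/
private lemma one_sub_inv_psd {m : ℕ} {S : Matrix (Fin m) (Fin m) ℝ}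
    (hS : S.PosDef) (hS1 : (S - 1).PosSemidef) :
    ((1 : Matrix (Fin m) (Fin m) ℝ) - S⁻¹).PosSemidef := by
  classical
  have hSdet : IsUnit S.det := (isUnit_iff_isUnit_det S).1 hS.isUnit
  have hSinv : S * S⁻¹ = 1 := mul_nonsing_inv S hSdet
  have hSinv' : S⁻¹ * S = 1 := nonsing_inv_mul S hSdet
  have hT := hS.inv.posSemidef
  set T := CFC.sqrt S⁻¹ with hTdef
  have hTpsd : T.PosSemidef := (CFC.sqrt_nonneg S⁻¹).posSemidef
  have hTT : T * T = S⁻¹ := CFC.sqrt_mul_sqrt_self S⁻¹ hT.nonneg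
  have hTSinv : T * S⁻¹ = S⁻¹ * T := by
    rw [← hTT, ← Matrix.mul_assoc]
  have hTS : S * T = T * S := by
    calc S * T = S * (T * S⁻¹) * S := by
          rw [Matrix.mul_assoc S (T * S⁻¹) S, Matrix.mul_assoc T S⁻¹ S, hSinv', Matrix.mul_one]
      _ = S * (S⁻¹ * T) * S := by rw [hTSinv]
      _ = T * S := by rw [← Matrix.mul_assoc S S⁻¹ T, hSinv, Matrix.one_mul]
  have hTST : T * S * T = 1 := by
    rw [← hTS, Matrix.mul_assoc, hTT, hSinv]
  have key := hS1.conjTranspose_mul_mul_same T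
  rw [hTpsd.1] at key
  have heq : T * (S - 1) * T = 1 - S⁻¹ := by
    rw [Matrix.mul_sub, Matrix.sub_mul, Matrix.mul_one, hTST, hTT]
  rwa [heq] at key

open scoped MatrixOrder in
private lemma inv_sub_inv_psd {m : ℕ} {A B : Matrix (Fin m) (Fin m) ℝ}
    (hA : A.PosDef) (hB : B.PosDef) (hBA : (B - A).PosSemidef) :
    (A⁻¹ - B⁻¹).PosSemidef := by
  classical
  have hRpsd0 := hA.posSemidef
  set R := CFC.sqrt A with hRdef
  have hRpsd : R.PosSemidef := (CFC.sqrt_nonneg A).posSemidef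
  have hRR : R * R = A := CFC.sqrt_mul_sqrt_self A hRpsd0.nonneg
  have hRdet : IsUnit R.det := by
    have h1 : R.det * R.det = A.det := by rw [← det_mul, hRR]
    have hAd := hA.det_pos.ne'
    exact isUnit_iff_ne_zero.2 (fun h => hAd (by rw [← h1, h, mul_zero]))
  have hRunit : IsUnit R := (isUnit_iff_isUnit_det R).2 hRdet
  have hRiH : (R⁻¹)ᴴ = R⁻¹ := by
    rw [conjTranspose_nonsing_inv, hRpsd.1]
  have hRinv : R * R⁻¹ = 1 := mul_nonsing_inv R hRdet
  have hRinv' : R⁻¹ * R = 1 := nonsing_inv_mul R hRdet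
  have hS : (R⁻¹ * B * R⁻¹).PosDef := by
    have := posDef_conj (C := R⁻¹) hB (isUnit_nonsing_inv_iff.2 hRunit)
    rwa [hRiH] at this
  have hS1 : (R⁻¹ * B * R⁻¹ - 1).PosSemidef := by
    have h1 : R⁻¹ * A * R⁻¹ = 1 := by
      rw [← hRR, ← Matrix.mul_assoc R⁻¹ R R, hRinv', Matrix.one_mul, hRinv]
    have key := hBA.conjTranspose_mul_mul_same R⁻¹
    rw [hRiH] at key
    have heq : R⁻¹ * (B - A) * R⁻¹ = R⁻¹ * B * R⁻¹ - 1 := by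
      rw [Matrix.mul_sub, Matrix.sub_mul, h1]
    rwa [heq] at key
  have h1S := one_sub_inv_psd hS hS1
  have hSdet : IsUnit (R⁻¹ * B * R⁻¹).det := (isUnit_iff_isUnit_det _).1 hS.isUnit
  have hAinv : A⁻¹ = R⁻¹ * R⁻¹ := by
    rw [← hRR, Matrix.mul_inv_rev]
  have hBeq : B = R * (R⁻¹ * B * R⁻¹) * R := by
    rw [Matrix.mul_assoc, Matrix.mul_assoc, Matrix.mul_assoc, hRinv', Matrix.mul_one,
      ← Matrix.mul_assoc, hRinv, Matrix.one_mul]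
  have hBinv : B⁻¹ = R⁻¹ * (R⁻¹ * B * R⁻¹)⁻¹ * R⁻¹ := by
    conv_lhs => rw [hBeq]
    rw [Matrix.mul_inv_rev, Matrix.mul_inv_rev, ← Matrix.mul_assoc]
  have heq : A⁻¹ - B⁻¹ = R⁻¹ * (1 - (R⁻¹ * B * R⁻¹)⁻¹) * R⁻¹ := by
    rw [hAinv, hBinv, Matrix.mul_sub, Matrix.sub_mul, Matrix.mul_one]
  rw [heq]
  have := h1S.conjTranspose_mul_mul_same R⁻¹
  rwa [hRiH] at this

theorem stmt4 {n q : ℕ} (A : Matrix (Fin n) (Fin n) ℝ) (hA : A.PosDef)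
    (H : Matrix (Fin q) (Fin n) ℝ)
    (Ψ : Matrix (Fin q) (Fin q) ℝ) (hΨ : Ψ.PosDef)
    (F : Matrix (Fin n) (Fin n) ℝ) :
    (F * (A⁻¹ - (A + Hᵀ * Ψ⁻¹ * H)⁻¹) * Fᵀ).PosSemidef := by
  have hC : (Hᵀ * Ψ⁻¹ * H).PosSemidef := by
    have := hΨ.inv.posSemidef.conjTranspose_mul_mul_same H
    rwa [Matrix.conjTranspose_eq_transpose_of_trivial] at this
  have hB : (A + Hᵀ * Ψ⁻¹ * H).PosDef := hA.add_posSemidef hC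
  have hBA : ((A + Hᵀ * Ψ⁻¹ * H) - A).PosSemidef := by
    simpa using hC
  have hD := inv_sub_inv_psd hA hB hBA
  have := hD.mul_mul_conjTranspose_same F
  rwa [Matrix.conjTranspose_eq_transpose_of_trivial] at this
end

section
/- Let C be a positive definite symmetric real matrix and let F_{kd} = (C + kI)⁻¹(C - dI) with k > 0. If the largest eigenvalue of F_{kd} S⁻¹ F_{kd} S is less than 1, where S = C + HᵀΨ⁻¹H is positive definite, then D₁ = S⁻¹ - F_{kd} S⁻¹ F_{kd} is positive definite; moreover, setting b₁ = (d+k)(C + kI)⁻¹β, the matrix S⁻¹ - F_{kd} S⁻¹ F_{kd} - b₁b₁ᵀ is positive semidefinite if and only if b₁ᵀ D₁⁻¹ b₁ ≤ 1. -/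
open Matrix

private lemma vecMulVec_mulVec' {m : ℕ} (a b x : Fin m → ℝ) :
    vecMulVec a b *ᵥ x = (b ⬝ᵥ x) • a := by
  ext i
  simp [vecMulVec, mulVec, dotProduct, Finset.mul_sum, mul_comm, mul_assoc, mul_left_comm]

private lemma aux_conj_posDef {m : ℕ} {M : Matrix (Fin m) (Fin m) ℝ} (hM : M.PosDef)
    (B : Matrix (Fin m) (Fin m) ℝ) (hB : IsUnit B.det) : (Bᵀ * M * B).PosDef := by
  have hMt : Mᵀ = M := by
    rw [← conjTranspose_eq_transpose_of_trivial]; exact hM.1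
  rw [posDef_iff_dotProduct_mulVec]
  constructor
  · show (Bᵀ * M * B)ᴴ = _
    rw [conjTranspose_eq_transpose_of_trivial, transpose_mul, transpose_mul,
      transpose_transpose, hMt, mul_assoc]
  · intro x hx
    have hBx : B *ᵥ x ≠ 0 := by
      intro h
      apply hx
      have hinj := Matrix.mulVec_injective_iff_isUnit.mpr ((Matrix.isUnit_iff_isUnit_det B).mpr hB)
      exact hinj (by rw [mulVec_zero]; exact h)
    have h2 := hM.dotProduct_mulVec_pos hBx
    simpa only [star_trivial, ← mulVec_mulVec, dotProduct_mulVec, vecMul_transpose] using h2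

private lemma aux_one_sub_posDef {m : ℕ} {M : Matrix (Fin m) (Fin m) ℝ} (hMps : M.PosSemidef)
    (h : ∀ μ ∈ spectrum ℝ M, μ < 1) : ((1 : Matrix (Fin m) (Fin m) ℝ) - M).PosDef := by
  have hM := hMps.1
  have hst := hM.spectral_theorem
  set U : Matrix (Fin m) (Fin m) ℝ := (hM.eigenvectorUnitary : Matrix (Fin m) (Fin m) ℝ) with hU_def
  have hUstar : star U = Uᵀ := by
    rw [star_eq_conjTranspose, conjTranspose_eq_transpose_of_trivial]
  have hUUt : U * Uᵀ = 1 := by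
    rw [← hUstar]; exact Unitary.coe_mul_star_self _
  have hUu : IsUnit U.det := by
    have hd : U.det * Uᵀ.det = 1 := by rw [← det_mul, hUUt, det_one]
    exact IsUnit.of_mul_eq_one _ hd
  have hUtu : IsUnit Uᵀ.det := by rwa [det_transpose]
  have hdiag : (RCLike.ofReal ∘ hM.eigenvalues : Fin m → ℝ) = hM.eigenvalues := by
    ext i; simp
  rw [Unitary.conjStarAlgAut_apply, ← hU_def] at hst
  rw [hUstar, hdiag] at hst
  have key : (1 : Matrix (Fin m) (Fin m) ℝ) - M
      = (Uᵀ)ᵀ * diagonal (fun i => 1 - hM.eigenvalues i) * Uᵀ := by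
    rw [transpose_transpose]
    have : diagonal (fun i => 1 - hM.eigenvalues i)
        = 1 - diagonal hM.eigenvalues := by
      rw [← diagonal_one, diagonal_sub]
    rw [this, Matrix.mul_sub, Matrix.mul_one, Matrix.sub_mul, hUUt, ← hst]
  rw [key]
  refine aux_conj_posDef ?_ _ hUtu
  refine Matrix.PosDef.diagonal fun i => ?_
  have := h _ (hM.eigenvalues_mem_spectrum_real i)
  linarith

theorem stmt5 {n q : ℕ} (C : Matrix (Fin n) (Fin n) ℝ) (hC : C.PosDef)
    (k d : ℝ) (hk : 0 < k)
    (H : Matrix (Fin q) (Fin n) ℝ)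
    (Ψ : Matrix (Fin q) (Fin q) ℝ) (hΨ : Ψ.PosDef)
    (S : Matrix (Fin n) (Fin n) ℝ) (hS : S = C + Hᵀ * Ψ⁻¹ * H)
    (hSpd : S.PosDef)
    (β : Fin n → ℝ)
    (F : Matrix (Fin n) (Fin n) ℝ)
    (hF : F = (C + k • (1 : Matrix (Fin n) (Fin n) ℝ))⁻¹
        * (C - d • (1 : Matrix (Fin n) (Fin n) ℝ)))
    (b₁ : Fin n → ℝ)
    (hb₁ : b₁ = (d + k) • ((C + k • (1 : Matrix (Fin n) (Fin n) ℝ))⁻¹ *ᵥ β))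
    (hspec : ∀ μ ∈ spectrum ℝ (F * S⁻¹ * F * S), μ < 1) :
    (S⁻¹ - F * S⁻¹ * F).PosDef ∧
      ((S⁻¹ - F * S⁻¹ * F - vecMulVec b₁ b₁).PosSemidef ↔
        b₁ ⬝ᵥ ((S⁻¹ - F * S⁻¹ * F)⁻¹ *ᵥ b₁) ≤ 1) := by
  -- symmetry facts
  have hCt : Cᵀ = C := by rw [← conjTranspose_eq_transpose_of_trivial]; exact hC.1
  have hSt : Sᵀ = S := by rw [← conjTranspose_eq_transpose_of_trivial]; exact hSpd.1
  have hSinv : S⁻¹.PosDef := hSpd.inv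
  have hSit : (S⁻¹)ᵀ = S⁻¹ := by rw [transpose_nonsing_inv, hSt]
  set A := C + k • (1 : Matrix (Fin n) (Fin n) ℝ) with hA_def
  set B := C - d • (1 : Matrix (Fin n) (Fin n) ℝ) with hB_def
  have hApd : A.PosDef := by
    refine hC.add_posSemidef ?_
    rw [smul_one_eq_diagonal]
    exact Matrix.PosSemidef.diagonal fun i => hk.le
  have hAu : IsUnit A.det := (Matrix.isUnit_iff_isUnit_det A).mp hApd.isUnit
  have hAt : Aᵀ = A := by
    rw [hA_def, transpose_add, transpose_smul, transpose_one, hCt]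
  have hBt : Bᵀ = B := by
    rw [hB_def, transpose_sub, transpose_smul, transpose_one, hCt]
  have hcomm : Commute A B := by
    have h2 : Commute C (d • (1 : Matrix (Fin n) (Fin n) ℝ)) :=
      (Commute.one_right C).smul_right d
    exact Commute.add_left ((Commute.refl C).sub_right h2)
      (((Commute.one_left C).smul_left k).sub_right
        (((Commute.one_left _).smul_left k)))
  have hFt : Fᵀ = F := by
    rw [hF, transpose_mul, transpose_nonsing_inv, hAt, hBt]
    letI := A.invertibleOfIsUnitDet hAu
    have h3 : Commute B A⁻¹ := by
      rw [← Matrix.invOf_eq_nonsing_inv]; exact hcomm.symm.invOf_right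
    exact h3.eq
  -- F * S⁻¹ * F is PSD
  have hFSF : (F * S⁻¹ * F).PosSemidef := by
    have := hSinv.posSemidef.conjTranspose_mul_mul_same F
    rwa [conjTranspose_eq_transpose_of_trivial, hFt] at this
  -- square root of S
  set G := (open scoped MatrixOrder in CFC.sqrt S) with hG_def
  have hGmul : G * G = S := by
    open scoped MatrixOrder in exact CFC.sqrt_mul_sqrt_self S hSpd.posSemidef.nonneg
  have hGt : Gᵀ = G := by
    rw [← conjTranspose_eq_transpose_of_trivial]
    open scoped MatrixOrder in exact (CFC.sqrt_nonneg S).posSemidef.1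
  have hGdet : G.det ≠ 0 := by
    intro h
    have : G.det * G.det = S.det := by rw [← det_mul, hGmul]
    rw [h, mul_zero] at this
    exact (hSpd.det_pos).ne this
  have hGdu : IsUnit G.det := isUnit_iff_ne_zero.mpr hGdet
  have hGu : IsUnit G := (Matrix.isUnit_iff_isUnit_det G).mpr hGdu
  have hGiG : G⁻¹ * G = 1 := nonsing_inv_mul G hGdu
  have hGGi : G * G⁻¹ = 1 := mul_nonsing_inv G hGdu
  have hSiGG : S⁻¹ = G⁻¹ * G⁻¹ := by rw [← hGmul, Matrix.mul_inv_rev]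
  have hGidu : IsUnit G⁻¹.det := by
    have hd : G⁻¹.det * G.det = 1 := by rw [← det_mul, hGiG, det_one]
    exact IsUnit.of_mul_eq_one _ hd
  have hGit : (G⁻¹)ᵀ = G⁻¹ := by rw [transpose_nonsing_inv, hGt]
  -- the conjugated matrix
  set M := G * (F * S⁻¹ * F) * G with hM_def
  have hMps : M.PosSemidef := by
    have := hFSF.conjTranspose_mul_mul_same G
    rwa [conjTranspose_eq_transpose_of_trivial, hGt] at this
  have hkey : M = G * (F * S⁻¹ * F * S) * G⁻¹ := by
    rw [hM_def]
    have : S * G⁻¹ = G := by rw [← hGmul, mul_assoc, hGGi, mul_one]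
    simp only [← mul_assoc]
    rw [mul_assoc _ S G⁻¹, this]
  have hspecM : ∀ μ ∈ spectrum ℝ M, μ < 1 := by
    intro μ hμ
    apply hspec
    rw [hkey] at hμ
    have hcoe : (hGu.unit : Matrix (Fin n) (Fin n) ℝ) = G := hGu.unit_spec
    have hcoei : ((hGu.unit⁻¹ : (Matrix (Fin n) (Fin n) ℝ)ˣ) : Matrix (Fin n) (Fin n) ℝ)
        = G⁻¹ := by rw [Matrix.coe_units_inv, hcoe]
    have heq : G * (F * S⁻¹ * F * S) * G⁻¹
        = (hGu.unit : Matrix (Fin n) (Fin n) ℝ) * (F * S⁻¹ * F * S)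
          * ((hGu.unit⁻¹ : (Matrix (Fin n) (Fin n) ℝ)ˣ) : Matrix (Fin n) (Fin n) ℝ) := by
      rw [hcoe, hcoei]
    rwa [heq, spectrum.units_conjugate] at hμ
  have h1M : ((1 : Matrix (Fin n) (Fin n) ℝ) - M).PosDef := aux_one_sub_posDef hMps hspecM
  have hD1eq : S⁻¹ - F * S⁻¹ * F = (G⁻¹)ᵀ * (1 - M) * G⁻¹ := by
    have e1 : G⁻¹ * (G * (F * S⁻¹ * F) * G) * G⁻¹ = F * S⁻¹ * F := by
      simp only [← mul_assoc]
      rw [hGiG, one_mul, mul_assoc _ G G⁻¹, hGGi, mul_one]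
    rw [hGit, Matrix.mul_sub, Matrix.mul_one, Matrix.sub_mul, ← hSiGG, hM_def, e1]
  have hD1 : (S⁻¹ - F * S⁻¹ * F).PosDef := by
    rw [hD1eq]; exact aux_conj_posDef h1M _ hGidu
  refine ⟨hD1, ?_⟩
  -- Part 2
  set D := S⁻¹ - F * S⁻¹ * F with hD_def
  have hDt : Dᵀ = D := by rw [← conjTranspose_eq_transpose_of_trivial]; exact hD1.1
  have hDdu : IsUnit D.det := (Matrix.isUnit_iff_isUnit_det D).mp hD1.isUnit
  have hDinv : D⁻¹.PosDef := hD1.inv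
  set r := D⁻¹ *ᵥ b₁ with hr_def
  have hDr : D *ᵥ r = b₁ := by
    rw [hr_def, mulVec_mulVec, mul_nonsing_inv D hDdu, one_mulVec]
  have hrD : ∀ x : Fin n → ℝ, r ⬝ᵥ (D *ᵥ x) = b₁ ⬝ᵥ x := by
    intro x
    rw [dotProduct_mulVec, ← hDt, vecMul_transpose, hDr]
  have ht0 : 0 ≤ b₁ ⬝ᵥ r := by
    have := hDinv.posSemidef.dotProduct_mulVec_nonneg b₁
    simpa [star_trivial, hr_def] using this
  constructor
  · intro hPSD
    have h0 := hPSD.dotProduct_mulVec_nonneg r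
    rw [star_trivial, sub_mulVec, dotProduct_sub, vecMulVec_mulVec', hrD r,
      dotProduct_smul, smul_eq_mul, dotProduct_comm r b₁] at h0
    nlinarith [ht0, h0]
  · intro ht
    rw [posSemidef_iff_dotProduct_mulVec]
    constructor
    · refine hD1.1.sub ?_
      show (vecMulVec b₁ b₁)ᴴ = _
      ext i j
      simp [vecMulVec, conjTranspose_apply, mul_comm]
    · intro x
      rw [star_trivial, sub_mulVec, dotProduct_sub, vecMulVec_mulVec',
        dotProduct_smul, smul_eq_mul, dotProduct_comm x b₁]
      set p := b₁ ⬝ᵥ x with hp_def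
      have hkey2 := hD1.posSemidef.dotProduct_mulVec_nonneg (x - p • r)
      simp only [star_trivial, mulVec_sub, mulVec_smul, hDr, dotProduct_sub, sub_dotProduct,
        smul_dotProduct, dotProduct_smul, smul_eq_mul] at hkey2
      rw [hrD x, dotProduct_comm x b₁, dotProduct_comm r b₁] at hkey2
      nlinarith [hkey2, ht, sq_nonneg p, ht0]
end

section
/- Let Δ be a positive definite symmetric n×n real matrix and u₁, u₂ vectors in ℝ^n. Then Δ + u₁u₁ᵀ − u₂u₂ᵀ is positive semidefinite if and only if u₂ᵀ (Δ + u₁u₁ᵀ)⁻¹ u₂ ≤ 1. -/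
open Matrix

lemma vmv_mulVec {n : ℕ} (u v x : Fin n → ℝ) : vecMulVec u v *ᵥ x = (v ⬝ᵥ x) • u := by
  ext i
  simp [mulVec, dotProduct, vecMulVec_apply, Finset.mul_sum, mul_comm, mul_assoc, mul_left_comm]

lemma vmv_herm {n : ℕ} (u : Fin n → ℝ) : (vecMulVec u u).IsHermitian := by
  ext i j
  simp [conjTranspose_apply, vecMulVec_apply, mul_comm]

lemma vmv_psd {n : ℕ} (u : Fin n → ℝ) : (vecMulVec u u).PosSemidef := by
  refine .of_dotProduct_mulVec_nonneg (vmv_herm u) fun x => ?_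
  simp only [star_trivial, vmv_mulVec, dotProduct_smul, smul_eq_mul, dotProduct_comm x u]
  exact mul_self_nonneg _

lemma herm_dot {n : ℕ} {M : Matrix (Fin n) (Fin n) ℝ} (hM : M.IsHermitian) (a b : Fin n → ℝ) :
    a ⬝ᵥ (M *ᵥ b) = (M *ᵥ a) ⬝ᵥ b := by
  rw [dotProduct_mulVec, ← mulVec_transpose, ← conjTranspose_eq_transpose_of_trivial, hM.eq]

theorem stmt10 {n : ℕ} (Δ : Matrix (Fin n) (Fin n) ℝ) (hΔ : Δ.PosDef)
    (u₁ u₂ : Fin n → ℝ) :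
    (Δ + vecMulVec u₁ u₁ - vecMulVec u₂ u₂).PosSemidef ↔
      u₂ ⬝ᵥ ((Δ + vecMulVec u₁ u₁)⁻¹ *ᵥ u₂) ≤ 1 := by
  set A := Δ + vecMulVec u₁ u₁ with hAdef
  have hA : A.PosDef := hΔ.add_posSemidef (vmv_psd u₁)
  have hAinv : A⁻¹.PosDef := hA.inv
  have hmul : A *ᵥ (A⁻¹ *ᵥ u₂) = u₂ := by
    rw [mulVec_mulVec, mul_nonsing_inv _ (isUnit_iff_ne_zero.mpr hA.det_pos.ne'), one_mulVec]
  set t := u₂ ⬝ᵥ (A⁻¹ *ᵥ u₂) with htdef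
  have ht0 : 0 ≤ t := by simpa using hAinv.posSemidef.dotProduct_mulVec_nonneg u₂
  have hquad : ∀ x : Fin n → ℝ, x ⬝ᵥ ((A - vecMulVec u₂ u₂) *ᵥ x)
      = x ⬝ᵥ (A *ᵥ x) - (u₂ ⬝ᵥ x) ^ 2 := by
    intro x
    rw [sub_mulVec, dotProduct_sub, vmv_mulVec, dotProduct_smul, smul_eq_mul,
      dotProduct_comm x u₂]
    ring
  constructor
  · intro h
    have h2 := h.dotProduct_mulVec_nonneg (A⁻¹ *ᵥ u₂)
    simp only [star_trivial] at h2
    rw [hquad] at h2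
    have hy : (A⁻¹ *ᵥ u₂) ⬝ᵥ (A *ᵥ (A⁻¹ *ᵥ u₂)) = t := by
      rw [hmul, dotProduct_comm]
    rw [hy] at h2
    nlinarith
  · intro ht
    refine .of_dotProduct_mulVec_nonneg ((hA.isHermitian).sub (vmv_herm u₂)) fun x => ?_
    simp only [star_trivial]
    rw [hquad]
    rcases eq_or_ne x 0 with rfl | hx
    · simp
    · set q := x ⬝ᵥ (A *ᵥ x) with hqdef
      set c := u₂ ⬝ᵥ x with hcdef
      have hq : 0 < q := by simpa using hA.dotProduct_mulVec_pos hx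
      set w := q • (A⁻¹ *ᵥ u₂) - c • x with hwdef
      have hAw : A *ᵥ w = q • u₂ - c • (A *ᵥ x) := by
        rw [hwdef, mulVec_sub, mulVec_smul, mulVec_smul, hmul]
      have h1 : (A⁻¹ *ᵥ u₂) ⬝ᵥ (A *ᵥ x) = c := by
        rw [herm_dot hA.isHermitian, hmul]
      have key : w ⬝ᵥ (A *ᵥ w) = q ^ 2 * t - q * c ^ 2 := by
        rw [hAw, hwdef]
        simp only [dotProduct_sub, sub_dotProduct, dotProduct_smul, smul_dotProduct,
          smul_eq_mul, h1, dotProduct_comm x u₂, ← hcdef, ← hqdef,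
          dotProduct_comm (A⁻¹ *ᵥ u₂) u₂, ← htdef]
        ring
      have hw := hA.posSemidef.dotProduct_mulVec_nonneg w
      simp only [star_trivial] at hw
      rw [key] at hw
      nlinarith
end

section
/- Let C be symmetric positive definite with all eigenvalues λᵢ, let k > 0 and d ∈ ℝ. If |λᵢ − d| < λᵢ + k for every eigenvalue λᵢ of C (equivalently −k < d and d < 2λᵢ + k), then for S = C + HᵀΨ⁻¹H = C (i.e., H = 0), the matrix C⁻¹ − F_{kd} C⁻¹ F_{kd} is positive definite, where F_{kd} = (C+kI)⁻¹(C−dI). -/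
open Matrix

private lemma posDef_conj_aux {n : ℕ} {A U : Matrix (Fin n) (Fin n) ℝ} (hA : A.PosDef)
    (h1 : U * Uᴴ = 1) (h2 : Uᴴ * U = 1) : (U * A * Uᴴ).PosDef := by
  refine posDef_iff_dotProduct_mulVec.mpr ⟨isHermitian_mul_mul_conjTranspose U hA.1, fun x hx => ?_⟩
  have key : star x ⬝ᵥ (U * A * Uᴴ) *ᵥ x = star (Uᴴ *ᵥ x) ⬝ᵥ A *ᵥ (Uᴴ *ᵥ x) := by
    rw [star_mulVec, conjTranspose_conjTranspose, ← dotProduct_mulVec, mulVec_mulVec,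
      mulVec_mulVec, mul_assoc]
  rw [key]
  apply (posDef_iff_dotProduct_mulVec.mp hA).2
  intro hzero
  apply hx
  have : U *ᵥ (Uᴴ *ᵥ x) = U *ᵥ 0 := by rw [hzero]
  rwa [mulVec_mulVec, h1, one_mulVec, mulVec_zero] at this

theorem stmt12 {n : ℕ} (C : Matrix (Fin n) (Fin n) ℝ) (hC : C.PosDef)
    (k d : ℝ) (hk : 0 < k)
    (hspec : ∀ i, |hC.1.eigenvalues i - d| < hC.1.eigenvalues i + k)
    (F : Matrix (Fin n) (Fin n) ℝ)
    (hF : F = (C + k • (1 : Matrix (Fin n) (Fin n) ℝ))⁻¹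
        * (C - d • (1 : Matrix (Fin n) (Fin n) ℝ))) :
    (C⁻¹ - F * C⁻¹ * Fᵀ).PosDef := by
  set lam := hC.1.eigenvalues with hlam
  set U : Matrix (Fin n) (Fin n) ℝ := (hC.1.eigenvectorUnitary : Matrix (Fin n) (Fin n) ℝ)
    with hU
  have hpos : ∀ i, 0 < lam i := fun i => hC.eigenvalues_pos i
  have hU1 : U * Uᴴ = 1 := (Matrix.mem_unitaryGroup_iff).mp hC.1.eigenvectorUnitary.2
  have hU2 : Uᴴ * U = 1 := (Matrix.mem_unitaryGroup_iff').mp hC.1.eigenvectorUnitary.2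
  -- the conjugation map
  set D : (Fin n → ℝ) → Matrix (Fin n) (Fin n) ℝ := fun μ => U * diagonal μ * Uᴴ with hD
  have hmul : ∀ μ ν, D μ * D ν = D (μ * ν) := by
    intro μ ν
    simp only [hD, Matrix.mul_assoc]
    rw [← Matrix.mul_assoc Uᴴ U, hU2, Matrix.one_mul, ← Matrix.mul_assoc (diagonal μ),
      diagonal_mul_diagonal]
    rfl
  have hadd : ∀ μ ν, D μ + D ν = D (μ + ν) := by
    intro μ ν
    simp only [hD]
    rw [← Matrix.add_mul, ← Matrix.mul_add, diagonal_add]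
    rfl
  have hsub : ∀ μ ν, D μ - D ν = D (μ - ν) := by
    intro μ ν
    simp only [hD]
    rw [← Matrix.sub_mul, ← Matrix.mul_sub, diagonal_sub]
    rfl
  have hconst : ∀ c : ℝ, c • (1 : Matrix (Fin n) (Fin n) ℝ) = D (fun _ => c) := by
    intro c
    have h1 : (diagonal (fun _ => c) : Matrix (Fin n) (Fin n) ℝ) = c • 1 := by
      have h2 : (fun _ : Fin n => c) = c • (fun _ : Fin n => (1 : ℝ)) := by
        funext i; simp
      rw [h2, diagonal_smul, diagonal_one]
    simp only [hD, h1]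
    rw [mul_smul_comm, mul_one, smul_mul_assoc, hU1]
  have hinv : ∀ μ : Fin n → ℝ, (∀ i, μ i ≠ 0) → (D μ)⁻¹ = D μ⁻¹ := by
    intro μ hμ
    apply Matrix.inv_eq_right_inv
    rw [hmul]
    have : μ * μ⁻¹ = fun _ => (1 : ℝ) := by
      funext i
      exact mul_inv_cancel₀ (hμ i)
    rw [this, ← hconst 1, one_smul]
  have hCeq : C = D lam := by
    have := hC.1.spectral_theorem
    simpa [hD, hU, hlam, Function.comp, star_eq_conjTranspose] using this
  -- the various matrices as conjugated diagonals
  have hCk : C + k • (1 : Matrix (Fin n) (Fin n) ℝ) = D (fun i => lam i + k) := by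
    rw [hCeq, hconst, hadd]; rfl
  have hCd : C - d • (1 : Matrix (Fin n) (Fin n) ℝ) = D (fun i => lam i - d) := by
    rw [hCeq, hconst, hsub]; rfl
  have hFeq : F = D (fun i => (lam i + k)⁻¹ * (lam i - d)) := by
    rw [hF, hCk, hCd, hinv _ (fun i => by have := hpos i; positivity), hmul]
    rfl
  have hCinv : C⁻¹ = D (fun i => (lam i)⁻¹) := by
    rw [hCeq, hinv _ (fun i => (hpos i).ne')]
    rfl
  have hFt : Fᵀ = F := by
    have herm : (D (fun i => (lam i + k)⁻¹ * (lam i - d))).IsHermitian :=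
      isHermitian_mul_mul_conjTranspose U (isHermitian_diagonal _)
    rw [hFeq, ← conjTranspose_eq_transpose_of_trivial, herm.eq]
  have hdiff : C⁻¹ - F * C⁻¹ * Fᵀ
      = D (fun i => (lam i)⁻¹ - (lam i + k)⁻¹ * (lam i - d) * (lam i)⁻¹
            * ((lam i + k)⁻¹ * (lam i - d))) := by
    rw [hFt, hFeq, hCinv, hmul, hmul, hsub]
    rfl
  rw [hdiff]
  apply posDef_conj_aux _ hU1 hU2
  apply Matrix.PosDef.diagonal
  intro i
  have hl := hpos i
  have habs := hspec i
  have hlk : 0 < lam i + k := by linarith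
  rw [abs_lt] at habs
  have hsq : (lam i - d) ^ 2 < (lam i + k) ^ 2 := by nlinarith
  have key : ((lam i + k)⁻¹ * (lam i - d)) ^ 2 < 1 := by
    rw [mul_pow, inv_pow]
    calc ((lam i + k) ^ 2)⁻¹ * (lam i - d) ^ 2
        < ((lam i + k) ^ 2)⁻¹ * (lam i + k) ^ 2 := by
          apply mul_lt_mul_of_pos_left hsq
          positivity
      _ = 1 := inv_mul_cancel₀ (by positivity)
  have : (lam i + k)⁻¹ * (lam i - d) * (lam i)⁻¹ * ((lam i + k)⁻¹ * (lam i - d))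
      = ((lam i + k)⁻¹ * (lam i - d)) ^ 2 * (lam i)⁻¹ := by ring
  rw [this]
  have hli : 0 < (lam i)⁻¹ := by positivity
  nlinarith [sq_nonneg ((lam i + k)⁻¹ * (lam i - d))]
end

section
/- Let S be symmetric positive definite, F an n×n matrix, and b a vector. If λ_max(F S⁻¹ Fᵀ S) < 1 and bᵀ(S⁻¹ − F S⁻¹ Fᵀ)⁻¹ b ≤ 1, then S⁻¹ − (F S⁻¹ Fᵀ + b bᵀ) is positive semidefinite, i.e., the MSEM of the estimator with covariance F S⁻¹ Fᵀ and bias b does not exceed S⁻¹ in the Loewner order. -/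
open Matrix

lemma posDef_conj_isUnit {m : Type*} [Fintype m] [DecidableEq m] {A B : Matrix m m ℝ}
    (hA : A.PosDef) (hB : IsUnit B) : (B * A * Bᴴ).PosDef := by
  refine posDef_iff_dotProduct_mulVec.2 ⟨(hA.posSemidef.mul_mul_conjTranspose_same B).1, fun x hx => ?_⟩
  have hBH : IsUnit Bᴴ := by
    rw [← Matrix.star_eq_conjTranspose]
    exact hB.star
  have hx' : Bᴴ *ᵥ x ≠ 0 := by
    intro h
    apply hx
    have hinj := Matrix.mulVec_injective_iff_isUnit.2 hBH
    have h2 : Bᴴ *ᵥ x = Bᴴ *ᵥ 0 := by rw [h, Matrix.mulVec_zero]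
    exact hinj h2
  have h0 := hA.dotProduct_mulVec_pos hx'
  simpa only [star_mulVec, dotProduct_mulVec, vecMul_vecMul, conjTranspose_conjTranspose]
    using h0

set_option maxHeartbeats 1000000 in
theorem stmt13 {n : ℕ} (S : Matrix (Fin n) (Fin n) ℝ) (hS : S.PosDef)
    (F : Matrix (Fin n) (Fin n) ℝ) (b : Fin n → ℝ)
    (hspec : ∀ μ ∈ spectrum ℝ (F * S⁻¹ * Fᵀ * S), μ < 1)
    (hbb : b ⬝ᵥ ((S⁻¹ - F * S⁻¹ * Fᵀ)⁻¹ *ᵥ b) ≤ 1) :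
    (S⁻¹ - (F * S⁻¹ * Fᵀ + vecMulVec b b)).PosSemidef := by
  classical
  rw [sub_add_eq_sub_sub]
  set M := F * S⁻¹ * Fᵀ with hMdef
  have hFt : Fᵀ = Fᴴ := (conjTranspose_eq_transpose_of_trivial F).symm
  have hM : M.PosSemidef := by
    rw [hMdef, hFt]
    exact hS.inv.posSemidef.mul_mul_conjTranspose_same F
  open MatrixOrder in set T := CFC.sqrt S with hTdef
  open MatrixOrder in have hT : T.PosSemidef := (CFC.sqrt_nonneg S).posSemidef
  open MatrixOrder in have hTT : T * T = S := CFC.sqrt_mul_sqrt_self S hS.posSemidef.nonneg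
  have hTdetu : IsUnit T.det := by
    have hmul : T.det * T.det = S.det := by rw [← det_mul, hTT]
    have hSdet : S.det ≠ 0 := hS.det_pos.ne'
    exact isUnit_iff_ne_zero.mpr (fun h => hSdet (by rw [← hmul, h, zero_mul]))
  have hTunit : IsUnit T := (Matrix.isUnit_iff_isUnit_det T).mpr hTdetu
  set A := T * M * T with hAdef
  have hAps : A.PosSemidef := by
    have h := hM.mul_mul_conjTranspose_same T
    rwa [hT.1.eq] at h
  -- spectrum of A equals spectrum of M * S
  obtain ⟨u, hu⟩ := hTunit
  have huinv : (↑u⁻¹ : Matrix (Fin n) (Fin n) ℝ) = T⁻¹ := by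
    rw [Matrix.coe_units_inv, hu]
  have hTTi : T * T⁻¹ = 1 := Matrix.mul_nonsing_inv T hTdetu
  have hconj : (↑u : Matrix (Fin n) (Fin n) ℝ) * (M * S) *
      ((u⁻¹ : (Matrix (Fin n) (Fin n) ℝ)ˣ) : Matrix (Fin n) (Fin n) ℝ) = A := by
    rw [huinv, hu, ← hTT, hAdef]
    simp only [← Matrix.mul_assoc]
    rw [Matrix.mul_assoc (T * M * T) T T⁻¹, hTTi, Matrix.mul_one]
  have hspecA : spectrum ℝ A = spectrum ℝ (M * S) := by
    rw [← hconj]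
    exact spectrum.units_conjugate
  have heig : ∀ i, hAps.1.eigenvalues i < 1 := by
    intro i
    apply hspec
    have h := hAps.1.eigenvalues_mem_spectrum_real i
    rwa [hspecA] at h
  -- 1 - A is positive definite
  have h1A : (1 - A).PosDef := by
    set U : Matrix (Fin n) (Fin n) ℝ := (hAps.1.eigenvectorUnitary : Matrix (Fin n) (Fin n) ℝ) with hUdef
    have hUmem : (hAps.1.eigenvectorUnitary : Matrix (Fin n) (Fin n) ℝ) ∈
        Matrix.unitaryGroup (Fin n) ℝ := hAps.1.eigenvectorUnitary.2
    obtain ⟨hU1, hU2⟩ := Unitary.mem_iff.mp hUmem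
    have hUU : U * star U = 1 := hU2
    have hUu : IsUnit U := ⟨⟨U, star U, hU2, hU1⟩, rfl⟩
    have key : 1 - A = U * (1 - diagonal (RCLike.ofReal ∘ hAps.1.eigenvalues)) * Uᴴ := by
      rw [Matrix.mul_sub, Matrix.sub_mul, Matrix.mul_one, ← Matrix.star_eq_conjTranspose, hUU]
      congr 1
      exact hAps.1.spectral_theorem
    rw [key]
    apply posDef_conj_isUnit _ hUu
    rw [← diagonal_one, diagonal_sub]
    rw [Matrix.posDef_diagonal_iff]
    intro i
    simp only [Pi.one_apply, Function.comp_apply, RCLike.ofReal_real_eq_id, id]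
    linarith [heig i]
  -- D := S⁻¹ - M is positive definite
  have hTinv : IsUnit T⁻¹ := Matrix.isUnit_nonsing_inv_iff.mpr ((Matrix.isUnit_iff_isUnit_det T).mpr hTdetu)
  have hinvH : (T⁻¹)ᴴ = T⁻¹ := by rw [Matrix.conjTranspose_nonsing_inv, hT.1.eq]
  have hDeq : S⁻¹ - M = T⁻¹ * (1 - A) * (T⁻¹)ᴴ := by
    rw [hinvH, Matrix.mul_sub, Matrix.sub_mul, Matrix.mul_one]
    congr 1
    · rw [← Matrix.mul_inv_rev, hTT]
    · rw [hAdef]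
      simp only [← Matrix.mul_assoc]
      rw [Matrix.nonsing_inv_mul T hTdetu, Matrix.one_mul,
        Matrix.mul_assoc (M) T T⁻¹, hTTi, Matrix.mul_one]
  have hD : (S⁻¹ - M).PosDef := hDeq ▸ posDef_conj_isUnit h1A hTinv
  -- Cauchy-Schwarz step
  have hDdetu : IsUnit (S⁻¹ - M).det := (Matrix.isUnit_iff_isUnit_det _).mp hD.isUnit
  set c := (S⁻¹ - M)⁻¹ *ᵥ b with hcdef
  have hDc : (S⁻¹ - M) *ᵥ c = b := by
    rw [hcdef, mulVec_mulVec, Matrix.mul_nonsing_inv _ hDdetu, one_mulVec]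
  have hsym : (S⁻¹ - M)ᵀ = S⁻¹ - M := by
    rw [← conjTranspose_eq_transpose_of_trivial]
    exact hD.1
  have hcx : ∀ y, c ⬝ᵥ ((S⁻¹ - M) *ᵥ y) = b ⬝ᵥ y := by
    intro y
    rw [dotProduct_mulVec]
    conv_lhs => rw [← hsym]
    rw [vecMul_transpose, hDc]
  have key : ∀ x, (b ⬝ᵥ x) ^ 2 ≤ (b ⬝ᵥ c) * (x ⬝ᵥ ((S⁻¹ - M) *ᵥ x)) := by
    intro x
    have quad : ∀ t : ℝ, 0 ≤ (b ⬝ᵥ c) * (t * t) + (2 * (b ⬝ᵥ x)) * t + x ⬝ᵥ ((S⁻¹ - M) *ᵥ x) := by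
      intro t
      have h0 := hD.posSemidef.dotProduct_mulVec_nonneg (x + t • c)
      simp only [star_trivial, mulVec_add, mulVec_smul, dotProduct_add, add_dotProduct,
        smul_dotProduct, dotProduct_smul, smul_eq_mul] at h0
      rw [hcx x] at h0
      rw [hDc] at h0
      have hbc : c ⬝ᵥ b = b ⬝ᵥ c := dotProduct_comm c b
      have hbx : x ⬝ᵥ b = b ⬝ᵥ x := dotProduct_comm x b
      rw [hbc, hbx] at h0
      nlinarith [h0]
    have hdisc := discrim_le_zero quad
    rw [discrim] at hdisc
    nlinarith [hdisc]
  -- conclude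
  have hmulvec : ∀ x, vecMulVec b b *ᵥ x = (b ⬝ᵥ x) • b := by
    intro x
    ext i
    simp only [mulVec, vecMulVec_apply, dotProduct, Pi.smul_apply, smul_eq_mul, Finset.sum_mul]
    exact Finset.sum_congr rfl fun j _ => by ring
  have hbbH : (vecMulVec b b).IsHermitian := by
    ext i j
    simp [conjTranspose_apply, vecMulVec_apply, mul_comm]
  refine posSemidef_iff_dotProduct_mulVec.2 ⟨hD.1.sub hbbH, fun x => ?_⟩
  · have hx0 : 0 ≤ x ⬝ᵥ ((S⁻¹ - M) *ᵥ x) := by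
      have := hD.posSemidef.dotProduct_mulVec_nonneg x
      simpa using this
    have hk := key x
    simp only [star_trivial, sub_mulVec, dotProduct_sub, hmulvec, dotProduct_smul, smul_eq_mul]
    have hbx : x ⬝ᵥ b = b ⬝ᵥ x := dotProduct_comm x b
    rw [hbx]
    have hsplit : x ⬝ᵥ ((S⁻¹ - M) *ᵥ x) = x ⬝ᵥ (S⁻¹ *ᵥ x) - x ⬝ᵥ (M *ᵥ x) := by
      simp [sub_mulVec, dotProduct_sub]
    nlinarith [hk, hx0, hbb, hsplit, mul_nonneg (sub_nonneg.mpr hbb) hx0]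
end

section
/- Let M, N be symmetric positive definite n×n real matrices with M − N positive definite, and let F be any n×n real matrix and u₁, u₂ vectors with u₂ᵀ(M − N + u₁u₁ᵀ)⁻¹u₂ ≤ 1. Then (M + u₁u₁ᵀ) − (N + u₂u₂ᵀ) is positive semidefinite. -/
open Matrix

lemma vecMulVec_posSemidef {n : ℕ} (v : Fin n → ℝ) : (vecMulVec v v).PosSemidef := by
  refine posSemidef_iff_dotProduct_mulVec.mpr ⟨?_, ?_⟩
  · ext i j
    simp [conjTranspose_apply, vecMulVec_apply, mul_comm]
  · intro x
    have hmv : vecMulVec v v *ᵥ x = (v ⬝ᵥ x) • v := by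
      funext i
      simp only [mulVec, vecMulVec_apply, dotProduct, Pi.smul_apply, smul_eq_mul,
        Finset.sum_mul]
      apply Finset.sum_congr rfl
      intro j _
      ring
    rw [star_trivial, hmv, dotProduct_smul, smul_eq_mul, dotProduct_comm]
    exact mul_self_nonneg _

theorem stmt16 {n : ℕ} (M N : Matrix (Fin n) (Fin n) ℝ)
    (hM : M.IsHermitian) (hN : N.IsHermitian)
    (hMN : (M - N).PosDef)
    (u₁ u₂ : Fin n → ℝ)
    (hu : u₂ ⬝ᵥ ((M - N + vecMulVec u₁ u₁)⁻¹ *ᵥ u₂) ≤ 1) :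
    ((M + vecMulVec u₁ u₁) - (N + vecMulVec u₂ u₂)).PosSemidef := by
  set B := M - N + vecMulVec u₁ u₁ with hBdef
  have hB : B.PosDef := hMN.add_posSemidef (vecMulVec_posSemidef u₁)
  have hBsymm : Bᵀ = B := by
    have := hB.isHermitian
    rwa [← conjTranspose_eq_transpose_of_trivial]
  have hsym : ∀ a b : Fin n → ℝ, a ⬝ᵥ (B *ᵥ b) = b ⬝ᵥ (B *ᵥ a) := by
    intro a b
    rw [dotProduct_mulVec, ← mulVec_transpose, hBsymm, dotProduct_comm]
  -- Cauchy–Schwarz for B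
  have hCS : ∀ x y : Fin n → ℝ,
      (y ⬝ᵥ (B *ᵥ x)) * (y ⬝ᵥ (B *ᵥ x)) ≤ (y ⬝ᵥ (B *ᵥ y)) * (x ⬝ᵥ (B *ᵥ x)) := by
    intro x y
    have hq : ∀ t : ℝ, 0 ≤ (y ⬝ᵥ (B *ᵥ y)) * (t * t)
        + (2 * (y ⬝ᵥ (B *ᵥ x))) * t + (x ⬝ᵥ (B *ᵥ x)) := by
      intro t
      have h0 := hB.posSemidef.dotProduct_mulVec_nonneg (x + t • y)
      have hexp : star (x + t • y) ⬝ᵥ (B *ᵥ (x + t • y))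
          = (y ⬝ᵥ (B *ᵥ y)) * (t * t) + (2 * (y ⬝ᵥ (B *ᵥ x))) * t + (x ⬝ᵥ (B *ᵥ x)) := by
        rw [star_trivial, mulVec_add, mulVec_smul, add_dotProduct, smul_dotProduct,
          dotProduct_add, dotProduct_add, dotProduct_smul, dotProduct_smul,
          hsym x y]
        simp only [smul_eq_mul]
        ring
      rw [hexp] at h0
      exact h0
    have hd := discrim_le_zero hq
    rw [discrim] at hd
    nlinarith [hd]
  have hdet : IsUnit B.det := (Matrix.isUnit_iff_isUnit_det B).mp hB.isUnit
  have hBinv : B * B⁻¹ = 1 := mul_nonsing_inv B hdet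
  set y := B⁻¹ *ᵥ u₂ with hy
  have hBy : B *ᵥ y = u₂ := by
    rw [hy, mulVec_mulVec, hBinv, one_mulVec]
  have hyBy : y ⬝ᵥ (B *ᵥ y) ≤ 1 := by
    rw [hBy, dotProduct_comm]
    exact hu
  refine posSemidef_iff_dotProduct_mulVec.mpr ⟨?_, ?_⟩
  · exact ((hM.add (vecMulVec_posSemidef u₁).1).sub (hN.add (vecMulVec_posSemidef u₂).1))
  · intro x
    have hgoal : star x ⬝ᵥ (((M + vecMulVec u₁ u₁) - (N + vecMulVec u₂ u₂)) *ᵥ x)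
        = x ⬝ᵥ (B *ᵥ x) - (u₂ ⬝ᵥ x) * (u₂ ⬝ᵥ x) := by
      have hM2 : (M + vecMulVec u₁ u₁) - (N + vecMulVec u₂ u₂) = B - vecMulVec u₂ u₂ := by
        rw [hBdef]; abel
      have hmv : vecMulVec u₂ u₂ *ᵥ x = (u₂ ⬝ᵥ x) • u₂ := by
        funext i
        simp only [mulVec, vecMulVec_apply, dotProduct, Pi.smul_apply, smul_eq_mul,
          Finset.sum_mul]
        apply Finset.sum_congr rfl
        intro j _
        ring
      have hquad : x ⬝ᵥ (vecMulVec u₂ u₂ *ᵥ x) = (u₂ ⬝ᵥ x) * (u₂ ⬝ᵥ x) := by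
        rw [hmv, dotProduct_smul, smul_eq_mul, dotProduct_comm]
      rw [hM2, star_trivial, sub_mulVec, dotProduct_sub, hquad]
    rw [hgoal]
    have hxBx : 0 ≤ x ⬝ᵥ (B *ᵥ x) := hB.posSemidef.dotProduct_mulVec_nonneg x
    have h1 : (u₂ ⬝ᵥ x) = y ⬝ᵥ (B *ᵥ x) := by
      rw [← hBy, hsym y x, hBy]
      exact dotProduct_comm _ _
    have h2 := hCS x y
    rw [← h1] at h2
    nlinarith [h2, hyBy, hxBx]
end
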